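/- Vertex counting lemma: Let c ≥ 1 and q ≥ 1 be integers and let e_1, …, e_{q+2} be q + 2 finite sets, each of cardinality exactly q, such that |e_i ∩ e_j| ≤ c − 1 for all i ≠ j. Then the union V = e_1 ∪ ⋯ ∪ e_{q+2} satisfies c(c+1)·|V| ≥ (c+1)q² + (c+3)q − 2(c−1). -/

import Mathlib

/-- Vertex counting lemma: if `e₁, …, e_{q+2}` are `q + 2` finite sets of
cardinality `q` with pairwise intersections of size at most `c − 1`, then their
union `V` satisfies `c(c+1)·|V| ≥ (c+1)q² + (c+3)q − 2(c−1)`. -/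
theorem vertex_counting_lemma {α : Type*} [DecidableEq α] (c q : ℕ)
    (hc : 1 ≤ c) (hq : 1 ≤ q)
    (e : Fin (q + 2) → Finset α)
    (hcard : ∀ i, (e i).card = q)
    (hint : ∀ i j, i ≠ j → ((e i) ∩ (e j)).card ≤ c - 1) :
    (c : ℤ) * (c + 1) * (Finset.univ.biUnion e).card
      ≥ (c + 1) * q ^ 2 + (c + 3) * q - 2 * (c - 1) := by
  classical
  set V := Finset.univ.biUnion e with hV
  have hsub : ∀ i, e i ⊆ V := fun i => Finset.subset_biUnion_of_mem e (Finset.mem_univ i)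
  set d : α → ℕ := fun v => (Finset.univ.filter (fun i => v ∈ e i)).card with hd
  have hind : ∀ i : Fin (q+2), ∑ v ∈ V, (if v ∈ e i then (1:ℕ) else 0) = (e i).card := by
    intro i
    rw [Finset.sum_ite_mem, Finset.sum_const, smul_eq_mul, mul_one,
      Finset.inter_eq_right.mpr (hsub i)]
  -- Sum of degrees
  have hA : ∑ v ∈ V, d v = (q + 2) * q := by
    have h1 : ∑ v ∈ V, d v
        = ∑ i : Fin (q+2), ∑ v ∈ V, (if v ∈ e i then (1:ℕ) else 0) := by
      rw [Finset.sum_comm]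
      simp only [hd, Finset.card_filter]
    rw [h1]
    simp [hind, hcard]
  -- Sum of squared degrees
  have hB : ∑ v ∈ V, d v * d v
      = ∑ i : Fin (q+2), ∑ j : Fin (q+2), ((e i) ∩ (e j)).card := by
    have h1 : ∀ v, d v * d v
        = ∑ i : Fin (q+2), ∑ j : Fin (q+2), (if v ∈ e i ∩ e j then (1:ℕ) else 0) := by
      intro v
      simp only [hd, Finset.card_filter, Finset.sum_mul_sum, Finset.mem_inter]
      congr 1; ext i; congr 1; ext j
      by_cases h1 : v ∈ e i <;> by_cases h2 : v ∈ e j <;> simp [h1, h2]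
    calc ∑ v ∈ V, d v * d v
        = ∑ v ∈ V, ∑ i : Fin (q+2), ∑ j : Fin (q+2),
            (if v ∈ e i ∩ e j then (1:ℕ) else 0) := by
          exact Finset.sum_congr rfl fun v _ => h1 v
      _ = ∑ i : Fin (q+2), ∑ v ∈ V, ∑ j : Fin (q+2),
            (if v ∈ e i ∩ e j then (1:ℕ) else 0) := Finset.sum_comm
      _ = ∑ i : Fin (q+2), ∑ j : Fin (q+2), ∑ v ∈ V,
            (if v ∈ e i ∩ e j then (1:ℕ) else 0) := by
          exact Finset.sum_congr rfl fun i _ => Finset.sum_comm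
      _ = ∑ i : Fin (q+2), ∑ j : Fin (q+2), ((e i) ∩ (e j)).card := by
          refine Finset.sum_congr rfl fun i _ => Finset.sum_congr rfl fun j _ => ?_
          rw [Finset.sum_ite_mem, Finset.sum_const, smul_eq_mul, mul_one,
            Finset.inter_eq_right.mpr ((Finset.inter_subset_left).trans (hsub i))]
  -- Bound on the sum of intersections (over ℤ)
  have hBle : (∑ v ∈ V, ((d v : ℤ) * (d v : ℤ)))
      ≤ ((q : ℤ) + 2) * (q + (q + 1) * ((c : ℤ) - 1)) := by
    have hcast : (∑ v ∈ V, ((d v : ℤ) * (d v : ℤ)))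
        = ∑ i : Fin (q+2), ∑ j : Fin (q+2), (((e i) ∩ (e j)).card : ℤ) := by
      exact_mod_cast hB
    rw [hcast]
    have hrow : ∀ i : Fin (q+2),
        ∑ j : Fin (q+2), (((e i) ∩ (e j)).card : ℤ)
          ≤ (q : ℤ) + (q + 1) * ((c : ℤ) - 1) := by
      intro i
      rw [← Finset.sum_erase_add _ _ (Finset.mem_univ i)]
      have h1 : (((e i) ∩ (e i)).card : ℤ) = q := by
        rw [Finset.inter_self, hcard]
      have h2 : ∑ j ∈ Finset.univ.erase i, (((e i) ∩ (e j)).card : ℤ)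
          ≤ ((Finset.univ.erase i).card : ℤ) * ((c : ℤ) - 1) := by
        rw [← nsmul_eq_mul, ← Finset.sum_const]
        refine Finset.sum_le_sum fun j hj => ?_
        have hij : i ≠ j := (Finset.ne_of_mem_erase hj).symm
        have := hint i j hij
        have hcast : (((e i ∩ e j).card : ℤ)) ≤ ((c - 1 : ℕ) : ℤ) := by
          exact_mod_cast this
        rwa [Nat.cast_sub hc, Nat.cast_one] at hcast
      have h3 : ((Finset.univ.erase i).card : ℤ) = (q : ℤ) + 1 := by
        rw [Finset.card_erase_of_mem (Finset.mem_univ i)]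
        simp
      rw [h1]
      rw [h3] at h2
      linarith
    calc ∑ i : Fin (q+2), ∑ j : Fin (q+2), (((e i) ∩ (e j)).card : ℤ)
        ≤ ∑ _i : Fin (q+2), ((q : ℤ) + (q + 1) * ((c : ℤ) - 1)) :=
          Finset.sum_le_sum fun i _ => hrow i
      _ = ((q : ℤ) + 2) * (q + (q + 1) * ((c : ℤ) - 1)) := by
          rw [Finset.sum_const]
          simp [Fintype.card_fin]
  -- Pointwise degree inequality summed
  have hpt : ∀ v ∈ V, 2 * (c : ℤ) * (d v : ℤ)
      ≤ (c : ℤ) * ((c : ℤ) + 1) + (d v : ℤ) * (d v : ℤ) - (d v : ℤ) := by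
    intro v _
    have key : (0 : ℤ) ≤ ((d v : ℤ) - c) * ((d v : ℤ) - c - 1) := by
      rcases le_or_gt ((d v : ℤ) - c) 0 with h | h
      · nlinarith [sq_nonneg ((d v : ℤ) - c)]
      · exact mul_nonneg (by linarith) (by linarith [Int.add_one_le_iff.mpr h])
    nlinarith [key]
  have hsum : ∑ v ∈ V, (2 * (c : ℤ) * (d v : ℤ))
      ≤ ∑ v ∈ V, ((c : ℤ) * ((c : ℤ) + 1) + (d v : ℤ) * (d v : ℤ) - (d v : ℤ)) :=
    Finset.sum_le_sum hpt
  have hAc : (∑ v ∈ V, (d v : ℤ)) = ((q : ℤ) + 2) * q := by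
    exact_mod_cast hA
  have h2cA : ∑ v ∈ V, (2 * (c : ℤ) * (d v : ℤ)) = 2 * (c : ℤ) * (((q : ℤ) + 2) * q) := by
    rw [← Finset.mul_sum, hAc]
  rw [Finset.sum_sub_distrib, Finset.sum_add_distrib, Finset.sum_const] at hsum
  simp only [nsmul_eq_mul] at hsum
  rw [hAc, h2cA] at hsum
  have hid : ((c : ℤ) + 1) * q ^ 2 + ((c : ℤ) + 3) * q - 2 * ((c : ℤ) - 1)
      = 2 * (c : ℤ) * (((q : ℤ) + 2) * q)
        - (((q : ℤ) + 2) * (q + (q + 1) * ((c : ℤ) - 1)) - ((q : ℤ) + 2) * q) := by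
    ring
  rw [ge_iff_le, hid]
  linarith [hBle, hsum]
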